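/- The function h(x) = (x+1)(1+1/x)^x satisfies h''(x) < 0 for all x ≥ 3; i.e., h is strictly concave on [3, ∞). -/

import Mathlib

open Real

noncomputable def h (x : ℝ) : ℝ := (x + 1) * (1 + 1 / x) ^ x

noncomputable def g (x : ℝ) : ℝ := (x + 1) * Real.log (x + 1) - x * Real.log x

lemma h_eq_exp_g {x : ℝ} (hx : 0 < x) : h x = Real.exp (g x) := by
  have hx1 : (0:ℝ) < x + 1 := by linarith
  have h1 : (1 + 1 / x : ℝ) = (x + 1) / x := by field_simp
  have h2 : g x = Real.log (x + 1) + Real.log ((x+1)/x) * x := by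
    rw [g, Real.log_div (by positivity) hx.ne']; ring
  rw [h, h1, Real.rpow_def_of_pos (by positivity), h2, Real.exp_add, Real.exp_log hx1]

lemma two_log_lt {y : ℝ} (hy : 1 < y) : 2 * Real.log y < y - 1 / y := by
  set ψ : ℝ → ℝ := fun t => t - 1 / t - 2 * Real.log t with hψ
  have hmono : StrictMonoOn ψ (Set.Ici (1:ℝ)) := by
    apply strictMonoOn_of_deriv_pos (convex_Ici 1)
    · apply ContinuousOn.sub
      · apply ContinuousOn.sub continuousOn_id
        exact continuousOn_const.div continuousOn_id (fun t ht => by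
          have : (1:ℝ) ≤ t := ht; positivity)
      · exact continuousOn_const.mul (Real.continuousOn_log.mono (fun t ht => by
          have : (1:ℝ) ≤ t := ht; simp; positivity))
    · intro t ht
      rw [interior_Ici] at ht
      have ht1 : (1:ℝ) < t := ht
      have ht0 : (0:ℝ) < t := by linarith
      have hd : HasDerivAt ψ (1 - (-(1 / t ^ 2)) - 2 * t⁻¹) t := by
        have h1 : HasDerivAt (fun t : ℝ => 1 / t) (-(1 / t ^ 2)) t := by
          simpa using (hasDerivAt_inv ht0.ne').const_mul (1:ℝ)
        exact ((hasDerivAt_id t).sub h1).sub ((Real.hasDerivAt_log ht0.ne').const_mul 2)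
      rw [hd.deriv]
      have h2 : 1 - (-(1 / t ^ 2)) - 2 * t⁻¹ = (t - 1) ^ 2 / t ^ 2 := by
        field_simp; ring
      rw [h2]
      have h3 : (0:ℝ) < (t-1)^2 := by
        have : t - 1 ≠ 0 := by intro hc; linarith
        positivity
      positivity
  have := hmono (by simp) (le_of_lt hy : (1:ℝ) ≤ y) hy
  simp only [hψ] at this
  simp only [Real.log_one] at this
  rw [one_div]
  norm_num at this
  linarith [this]

lemma key_ineq {x : ℝ} (hx : 0 < x) :
    (Real.log (x + 1) - Real.log x) ^ 2 + (1 / (x + 1) - 1 / x) < 0 := by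
  set y := Real.sqrt ((x + 1) / x) with hy
  have hx1 : (0:ℝ) < x + 1 := by linarith
  have hr : (1:ℝ) < (x + 1) / x := by rw [lt_div_iff₀ hx]; linarith
  have hy1 : 1 < y := by
    have := Real.sqrt_lt_sqrt (le_of_lt one_pos) hr
    simpa [hy] using this
  have hy0 : 0 < y := by linarith
  have hsq : y ^ 2 = (x + 1) / x := Real.sq_sqrt (by positivity)
  have hlog : Real.log (x + 1) - Real.log x = 2 * Real.log y := by
    rw [hy, Real.log_sqrt (by positivity), ← Real.log_div hx1.ne' hx.ne']
    ring
  have hlt : 2 * Real.log y < y - 1 / y := two_log_lt hy1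
  have hlogpos : 0 ≤ 2 * Real.log y := by
    have := Real.log_nonneg hy1.le; linarith
  have hsq_lt : (2 * Real.log y) ^ 2 < (y - 1 / y) ^ 2 := by
    apply pow_lt_pow_left₀ hlt hlogpos (by norm_num)
  have hval : (y - 1 / y) ^ 2 = 1 / (x * (x + 1)) := by
    have : (y - 1 / y) ^ 2 = y ^ 2 - 2 + 1 / y ^ 2 := by
      field_simp; ring
    rw [this, hsq]
    field_simp
    ring
  have h3 : 1 / (x + 1) - 1 / x = -(1 / (x * (x + 1))) := by
    field_simp
    ring
  rw [hlog, h3]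
  have := hsq_lt.trans_eq hval
  linarith

lemma hasDerivAt_g {x : ℝ} (hx : 0 < x) :
    HasDerivAt g (Real.log (x + 1) - Real.log x) x := by
  have hx1 : (0:ℝ) < x + 1 := by linarith
  have hL : HasDerivAt (fun y : ℝ => Real.log (y + 1)) (x + 1)⁻¹ x := by
    simpa [Function.comp_def] using (Real.hasDerivAt_log hx1.ne').comp x ((hasDerivAt_id x).add_const 1)
  have h1 : HasDerivAt (fun y : ℝ => (y + 1) * Real.log (y + 1))
      (1 * Real.log (x + 1) + (x + 1) * (x + 1)⁻¹) x :=
    ((hasDerivAt_id x).add_const 1).mul hL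
  have h2 : HasDerivAt (fun y : ℝ => y * Real.log y)
      (1 * Real.log x + x * x⁻¹) x :=
    (hasDerivAt_id x).mul (Real.hasDerivAt_log hx.ne')
  have := h1.sub h2
  have heq : 1 * Real.log (x + 1) + (x + 1) * (x + 1)⁻¹ - (1 * Real.log x + x * x⁻¹)
      = Real.log (x + 1) - Real.log x := by
    field_simp
    ring
  rw [heq] at this
  exact this

lemma hasDerivAt_logdiff {x : ℝ} (hx : 0 < x) :
    HasDerivAt (fun y : ℝ => Real.log (y + 1) - Real.log y) ((x + 1)⁻¹ - x⁻¹) x := by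
  have hx1 : (0:ℝ) < x + 1 := by linarith
  have hL : HasDerivAt (fun y : ℝ => Real.log (y + 1)) (x + 1)⁻¹ x := by
    simpa [Function.comp_def] using (Real.hasDerivAt_log hx1.ne').comp x ((hasDerivAt_id x).add_const 1)
  exact hL.sub (Real.hasDerivAt_log hx.ne')

noncomputable def G (x : ℝ) : ℝ := Real.exp (g x)
noncomputable def G' (x : ℝ) : ℝ := Real.exp (g x) * (Real.log (x + 1) - Real.log x)

lemma hasDerivAt_G {x : ℝ} (hx : 0 < x) : HasDerivAt G (G' x) x :=
  (hasDerivAt_g hx).exp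

lemma hasDerivAt_G' {x : ℝ} (hx : 0 < x) :
    HasDerivAt G'
      (Real.exp (g x) * ((Real.log (x + 1) - Real.log x) ^ 2 + ((x + 1)⁻¹ - x⁻¹))) x := by
  have h1 := ((hasDerivAt_g hx).exp).mul (hasDerivAt_logdiff hx)
  have heq : Real.exp (g x) * (Real.log (x + 1) - Real.log x) * (Real.log (x + 1) - Real.log x)
      + Real.exp (g x) * ((x + 1)⁻¹ - x⁻¹)
      = Real.exp (g x) * ((Real.log (x + 1) - Real.log x) ^ 2 + ((x + 1)⁻¹ - x⁻¹)) := by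
    ring
  rw [heq] at h1
  exact h1

theorem h_strictConcaveOn : StrictConcaveOn ℝ (Set.Ici (3 : ℝ)) h := by
  apply strictConcaveOn_of_deriv2_neg (convex_Ici 3)
  · -- continuity
    apply ContinuousOn.mul (continuousOn_id.add continuousOn_const)
    apply ContinuousOn.rpow
    · exact continuousOn_const.add (continuousOn_const.div continuousOn_id
        fun x hx => by have : (3:ℝ) ≤ x := hx; positivity)
    · exact continuousOn_id
    · intro x hx
      have : (3:ℝ) ≤ x := hx
      left
      positivity
  · intro x hx
    rw [interior_Ici] at hx
    have hx0 : (0:ℝ) < x := by have : (3:ℝ) < x := hx; linarith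
    have hmem : Set.Ioi (0:ℝ) ∈ nhds x := isOpen_Ioi.mem_nhds hx0
    have e1 : h =ᶠ[nhds x] G :=
      Filter.eventuallyEq_of_mem hmem fun y hy => h_eq_exp_g hy
    have e2 : deriv h =ᶠ[nhds x] deriv G := e1.deriv
    have e3 : deriv G =ᶠ[nhds x] G' :=
      Filter.eventuallyEq_of_mem hmem fun y hy => (hasDerivAt_G hy).deriv
    have e4 : deriv h =ᶠ[nhds x] G' := e2.trans e3
    have e5 : deriv (deriv h) x = deriv G' x := e4.deriv_eq
    have hval : deriv G' x
        = Real.exp (g x) * ((Real.log (x + 1) - Real.log x) ^ 2 + ((x + 1)⁻¹ - x⁻¹)) :=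
      (hasDerivAt_G' hx0).deriv
    show deriv (deriv h) x < 0
    rw [e5, hval]
    apply mul_neg_of_pos_of_neg (Real.exp_pos _)
    have := key_ineq hx0
    rw [one_div, one_div] at this
    exact this
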